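/- arXiv:2012.08660 — 2 statements merged into one kernel-verified Lean document; each statement's English description precedes it below -/
import Mathlib

section
/- Let f_i : ℝ^d → ℝ, i = 1,…,N, be convex and L-smooth, x_1,…,x_N ∈ ℝ^d with average x̄, and g = (1/N)∑_i ∇f_i(x_i). Then for each j, f := (1/N)∑_i f_i satisfies f(x_j) ≤ f(x̄) + ⟨g, x_j - x̄⟩ + L‖x_j - x̄‖² + (L/N)∑_i ‖x_i - x̄‖², and consequently (1/N)∑_j f(x_j) ≤ f(x̄) + (2L/N)∑_i ‖x_i - x̄‖². -/
open Finset
open scoped RealInnerProductSpace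

lemma descent {E : Type*} [NormedAddCommGroup E] [InnerProductSpace ℝ E] [CompleteSpace E]
    {L : ℝ} (hL : 0 ≤ L) (f : E → ℝ) (f' : E → E)
    (hgrad : ∀ x, HasGradientAt f (f' x) x)
    (hlip : LipschitzWith (Real.toNNReal L) f') (x y : E) :
    f y ≤ f x + ⟪f' x, y - x⟫ + L / 2 * ‖y - x‖ ^ 2 := by
  set γ : ℝ → E := fun t => x + t • (y - x) with hγ
  have hline : ∀ t : ℝ, HasDerivAt γ (y - x) t := fun t => by
    simpa [hγ] using ((hasDerivAt_id t).smul_const (y - x)).const_add x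
  have hφ : ∀ t : ℝ, HasDerivAt (fun t => f (γ t)) ⟪f' (γ t), y - x⟫ t := by
    intro t
    have h1 := ((hgrad (γ t)).hasFDerivAt.comp_hasDerivAt t (hline t))
    simp at h1
    exact h1
  have hcontf' : Continuous f' := hlip.continuous
  have hcont : Continuous fun t : ℝ => ⟪f' (γ t), y - x⟫ := by
    exact (continuous_inner.comp ((hcontf'.comp (by continuity)).prodMk continuous_const))
  have hint : ∀ a b : ℝ, IntervalIntegrable (fun t => ⟪f' (γ t), y - x⟫) MeasureTheory.volume a b :=
    fun a b => hcont.intervalIntegrable a b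
  have key : f y - f x = ∫ t in (0:ℝ)..1, ⟪f' (γ t), y - x⟫ := by
    have := intervalIntegral.integral_eq_sub_of_hasDerivAt
      (f := fun t => f (γ t)) (fun t _ => hφ t) (hint 0 1)
    simp [hγ] at this
    rw [this]
  have bnd : ∀ t ∈ Set.Icc (0:ℝ) 1, ⟪f' (γ t), y - x⟫ ≤ ⟪f' x, y - x⟫ + L * t * ‖y - x‖ ^ 2 := by
    intro t ht
    have h1 : ⟪f' (γ t) - f' x, y - x⟫ ≤ ‖f' (γ t) - f' x‖ * ‖y - x‖ :=
      real_inner_le_norm _ _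
    have h2 : ‖f' (γ t) - f' x‖ ≤ L * (t * ‖y - x‖) := by
      have := hlip.dist_le_mul (γ t) x
      rw [Real.coe_toNNReal _ hL] at this
      simpa [hγ, dist_eq_norm, norm_smul, abs_of_nonneg ht.1, mul_assoc] using this
    have := h1.trans (mul_le_mul_of_nonneg_right h2 (norm_nonneg _))
    nlinarith [inner_sub_left (𝕜 := ℝ) (f' (γ t)) (f' x) (y - x), norm_nonneg (y - x)]
  have mono : (∫ t in (0:ℝ)..1, ⟪f' (γ t), y - x⟫)
      ≤ ∫ t in (0:ℝ)..1, (⟪f' x, y - x⟫ + L * t * ‖y - x‖ ^ 2) := by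
    apply intervalIntegral.integral_mono_on (by norm_num) (hint 0 1)
    · exact (Continuous.intervalIntegrable (by continuity) 0 1)
    · exact bnd
  have calc2 : (∫ t in (0:ℝ)..1, (⟪f' x, y - x⟫ + L * t * ‖y - x‖ ^ 2))
      = ⟪f' x, y - x⟫ + L / 2 * ‖y - x‖ ^ 2 := by
    rw [intervalIntegral.integral_add (by exact Continuous.intervalIntegrable (by continuity) 0 1)
      (by exact Continuous.intervalIntegrable (by continuity) 0 1)]
    have h2 : (∫ t in (0:ℝ)..1, L * t * ‖y - x‖ ^ 2) = L / 2 * ‖y - x‖ ^ 2 := by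
      rw [show (fun t : ℝ => L * t * ‖y - x‖ ^ 2) = fun t : ℝ => t * (L * ‖y - x‖ ^ 2)
        from funext fun t => by ring, intervalIntegral.integral_mul_const, integral_id]
      ring
    rw [h2]
    simp
  linarith [key ▸ mono.trans_eq calc2]
theorem avg_function_at_local_iterates
    {E : Type*} [NormedAddCommGroup E] [InnerProductSpace ℝ E] [CompleteSpace E]
    {N : ℕ} (hN : 0 < N) (L : ℝ) (hL : 0 < L)
    (f : Fin N → E → ℝ) (f' : Fin N → E → E)
    (hgrad : ∀ i x, HasGradientAt (f i) (f' i x) x)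
    (hconv : ∀ i, ConvexOn ℝ Set.univ (f i))
    (hsmooth : ∀ i, LipschitzWith (Real.toNNReal L) (f' i))
    (x : Fin N → E) (xbar : E) (hxbar : xbar = (N : ℝ)⁻¹ • ∑ i, x i)
    (g : E) (hg : g = (N : ℝ)⁻¹ • ∑ i, f' i (x i))
    (fbar : E → ℝ) (hfbar : fbar = fun y => (N : ℝ)⁻¹ * ∑ i, f i y) :
    (∀ j : Fin N,
      fbar (x j) ≤ fbar xbar + ⟪g, x j - xbar⟫ + L * ‖x j - xbar‖^2
        + (L / N) * ∑ i, ‖x i - xbar‖^2) ∧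
    (N : ℝ)⁻¹ * ∑ j, fbar (x j)
      ≤ fbar xbar + (2 * L / N) * ∑ i, ‖x i - xbar‖^2 := by
  have hNR : (0:ℝ) < (N:ℝ) := by exact_mod_cast hN
  have hsum_sq_nonneg : (0:ℝ) ≤ ∑ i, ‖x i - xbar‖^2 :=
    Finset.sum_nonneg fun i _ => sq_nonneg _
  have main : ∀ j : Fin N,
      fbar (x j) ≤ fbar xbar + ⟪g, x j - xbar⟫ + L * ‖x j - xbar‖^2
        + (L / (2*N)) * ∑ i, ‖x i - xbar‖^2 := by
    intro j
    have per_i : ∀ i : Fin N, f i (x j) ≤ f i xbar + ⟪f' i (x i), x j - xbar⟫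
        + L * ‖x j - xbar‖^2 + L/2 * ‖x i - xbar‖^2 := by
      intro i
      have h1 := descent hL.le (f i) (f' i) (hgrad i) (hsmooth i) xbar (x j)
      have h2 : ⟪f' i xbar - f' i (x i), x j - xbar⟫
          ≤ ‖f' i xbar - f' i (x i)‖ * ‖x j - xbar‖ := real_inner_le_norm _ _
      have h3 : ‖f' i xbar - f' i (x i)‖ ≤ L * ‖x i - xbar‖ := by
        have := (hsmooth i).dist_le_mul xbar (x i)
        rw [Real.coe_toNNReal _ hL.le] at this
        simpa [dist_eq_norm, norm_sub_rev (xbar)] using this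
      have h4 : ⟪f' i xbar - f' i (x i), x j - xbar⟫ ≤ L * ‖x i - xbar‖ * ‖x j - xbar‖ :=
        h2.trans (mul_le_mul_of_nonneg_right h3 (norm_nonneg _))
      have h5 := inner_sub_left (𝕜 := ℝ) (f' i xbar) (f' i (x i)) (x j - xbar)
      nlinarith [sq_nonneg (‖x i - xbar‖ - ‖x j - xbar‖), norm_nonneg (x i - xbar),
        norm_nonneg (x j - xbar)]
    have hsum := Finset.sum_le_sum (fun i (_ : i ∈ Finset.univ) => per_i i)
    have hinner : ∑ i, ⟪f' i (x i), x j - xbar⟫ = (N:ℝ) * ⟪g, x j - xbar⟫ := by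
      rw [hg, real_inner_smul_left, ← sum_inner]
      field_simp
    rw [hfbar]
    simp only [Finset.sum_add_distrib, hinner, Finset.sum_const, Finset.card_univ,
      Fintype.card_fin, nsmul_eq_mul, ← Finset.mul_sum] at hsum
    have := mul_le_mul_of_nonneg_left hsum (le_of_lt (inv_pos.mpr hNR))
    calc (N:ℝ)⁻¹ * ∑ i, f i (x j) ≤ (N:ℝ)⁻¹ * (∑ i, f i xbar + (N:ℝ) * ⟪g, x j - xbar⟫
          + (N:ℝ) * (L * ‖x j - xbar‖^2) + L/2 * ∑ i, ‖x i - xbar‖^2) := by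
          exact mul_le_mul_of_nonneg_left (hsum.trans_eq (by ring))
            (le_of_lt (inv_pos.mpr hNR))
      _ = (N:ℝ)⁻¹ * ∑ i, f i xbar + ⟪g, x j - xbar⟫ + L * ‖x j - xbar‖^2
          + (L / (2*N)) * ∑ i, ‖x i - xbar‖^2 := by field_simp
  constructor
  · intro j
    refine (main j).trans ?_
    have : (L / (2*N)) * ∑ i, ‖x i - xbar‖^2 ≤ (L / N) * ∑ i, ‖x i - xbar‖^2 := by
      apply mul_le_mul_of_nonneg_right _ hsum_sq_nonneg
      rw [div_le_div_iff₀ (by positivity) hNR]; nlinarith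
    linarith
  · have hzero : ∑ j, ⟪g, x j - xbar⟫ = 0 := by
      rw [← inner_sum]
      have : ∑ j, (x j - xbar) = 0 := by
        rw [Finset.sum_sub_distrib, Finset.sum_const, Finset.card_univ, Fintype.card_fin,
          hxbar, ← Nat.cast_smul_eq_nsmul ℝ, smul_smul,
          mul_inv_cancel₀ (ne_of_gt hNR), one_smul, sub_self]
      rw [this, inner_zero_right]
    have hsum := Finset.sum_le_sum (fun j (_ : j ∈ Finset.univ) => main j)
    simp only [Finset.sum_add_distrib, hzero, Finset.sum_const, Finset.card_univ,
      Fintype.card_fin, nsmul_eq_mul, ← Finset.mul_sum] at hsum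
    have h2 := mul_le_mul_of_nonneg_left hsum (le_of_lt (inv_pos.mpr hNR))
    calc (N:ℝ)⁻¹ * ∑ j, fbar (x j)
        ≤ (N:ℝ)⁻¹ * ((N:ℝ) * fbar xbar + 0 + L * ∑ j, ‖x j - xbar‖^2
          + (N:ℝ) * ((L / (2*N)) * ∑ i, ‖x i - xbar‖^2)) := by
          exact mul_le_mul_of_nonneg_left (hsum.trans_eq (by ring))
            (le_of_lt (inv_pos.mpr hNR))
      _ = fbar xbar + (L/N + L/(2*N)) * ∑ i, ‖x i - xbar‖^2 := by field_simp; ring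
      _ ≤ fbar xbar + (2 * L / N) * ∑ i, ‖x i - xbar‖^2 := by
          have : (L/N + L/(2*N)) ≤ 2*L/N := by
            rw [div_add_div _ _ (ne_of_gt hNR) (by positivity), div_le_div_iff₀ (by positivity) hNR]
            nlinarith [mul_pos (mul_pos hL hNR) hNR]
          nlinarith
end

section
/- Let V be a closed convex set in ℝ^d, φ : V → ℝ convex, h : V → ℝ differentiable and strongly convex, and d(w,u) = h(w) - h(u) - ⟨∇h(u), w - u⟩ the Bregman divergence of h. Given u ∈ V, if w⁺ = argmin_{w∈V} {φ(w) + d(w,u)}, then for all w ∈ V: φ(w) + d(w,u) ≥ φ(w⁺) + d(w⁺,u) + d(w,w⁺). -/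
open scoped RealInnerProductSpace

theorem bregman_three_point
    {E : Type*} [NormedAddCommGroup E] [InnerProductSpace ℝ E] [CompleteSpace E]
    (V : Set E) (hVclosed : IsClosed V) (hVconv : Convex ℝ V)
    (φ : E → ℝ) (hφ : ConvexOn ℝ V φ)
    (h : E → ℝ) (h' : E → E)
    (hgrad : ∀ x, HasGradientAt h (h' x) x)
    (mS : ℝ) (hmS : 0 < mS) (hstrong : StrongConvexOn V mS h)
    (d : E → E → ℝ)
    (hd : d = fun w u => h w - h u - ⟪h' u, w - u⟫)
    (u : E) (hu : u ∈ V) (wp : E) (hwp : wp ∈ V)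
    (hargmin : ∀ w ∈ V, φ wp + d wp u ≤ φ w + d w u) :
    ∀ w ∈ V, φ wp + d wp u + d w wp ≤ φ w + d w u := by
  subst hd
  intro w hw
  set v := w - wp with hv
  -- derivative of t ↦ h (wp + t • v) at 0
  have hc : HasDerivAt (fun t : ℝ => wp + t • v) v (0 : ℝ) := by
    simpa using ((hasDerivAt_id (0:ℝ)).smul_const v).const_add wp
  have hψ : HasDerivAt (fun t : ℝ => h (wp + t • v)) ⟪h' wp, v⟫ 0 := by
    have h1 : HasFDerivAt h (InnerProductSpace.toDual ℝ E (h' wp) : E →L[ℝ] ℝ)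
        ((fun t : ℝ => wp + t • v) 0) := by
      simpa using (hgrad wp).hasFDerivAt
    have := h1.comp_hasDerivAt (0 : ℝ) hc
    simpa [Function.comp_def] using this
  have htend : Filter.Tendsto (slope (fun t : ℝ => h (wp + t • v)) 0)
      (nhdsWithin 0 (Set.Ioi 0)) (nhds ⟪h' wp, v⟫) :=
    (hasDerivAt_iff_tendsto_slope.mp hψ).mono_left
      (nhdsWithin_mono 0 (fun x hx => ne_of_gt hx))
  have hA : φ wp + ⟪h' u, v⟫ - φ w ≤ ⟪h' wp, v⟫ := by
    refine ge_of_tendsto htend ?_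
    filter_upwards [Ioo_mem_nhdsGT_of_mem
      (by constructor <;> norm_num : (0:ℝ) ∈ Set.Ico (0:ℝ) 1)] with t ht
    have ht0 : 0 < t := ht.1
    have ht1 : t < 1 := ht.2
    have hmem : wp + t • v ∈ V := by
      have := hVconv hwp hw (by linarith : (0:ℝ) ≤ 1 - t) ht0.le (by ring)
      have heq : (1 - t) • wp + t • w = wp + t • v := by
        rw [hv]; module
      rwa [heq] at this
    have hφt : φ (wp + t • v) ≤ (1 - t) * φ wp + t * φ w := by
      have := hφ.2 hwp hw (by linarith : (0:ℝ) ≤ 1 - t) ht0.le (by ring)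
      have heq : (1 - t) • wp + t • w = wp + t • v := by
        rw [hv]; module
      rw [heq] at this
      simpa using this
    have harg := hargmin (wp + t • v) hmem
    dsimp only at harg
    have hin : ⟪h' u, wp + t • v - u⟫ = ⟪h' u, wp - u⟫ + t * ⟪h' u, v⟫ := by
      have : wp + t • v - u = (wp - u) + t • v := by abel
      rw [this, inner_add_right, real_inner_smul_right]
    rw [hin] at harg
    have hslope : slope (fun t : ℝ => h (wp + t • v)) 0 t
        = (h (wp + t • v) - h wp) / t := by
      simp [slope_def_field]
    rw [hslope, le_div_iff₀ ht0]
    nlinarith [harg, hφt]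
  -- conclude
  have hwu : ⟪h' u, w - u⟫ = ⟪h' u, wp - u⟫ + ⟪h' u, v⟫ := by
    have : w - u = (wp - u) + v := by rw [hv]; abel
    rw [this, inner_add_right]
  have hwpv : (⟪h' wp, w - wp⟫ : ℝ) = ⟪h' wp, v⟫ := by rw [hv]
  dsimp only
  rw [hwu]
  rw [show w - wp = v from hv.symm] at *
  linarith [hA]
end
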